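/- Let g be a finite-dimensional real Lie algebra equipped with an inner product ⟨·,·⟩; for u ∈ g let ad_u : g → g denote v ↦ ⁅u,v⁆ and ad*_u its adjoint with respect to ⟨·,·⟩. Let X ∈ g satisfy ad*_X = −ad_X, and let Φ(t) := exp(t·ad_X) denote the operator exponential on g. Let V : ℝ → g be differentiable and define U(t) := X + Φ(t)(V(t)). Then U satisfies the Euler–Arnold equation U'(t) = −ad*_{U(t)} U(t) for all t ∈ ℝ if and only if V satisfies V'(t) = −ad*_{V(t)} V(t) − ad*_{V(t)} X for all t ∈ ℝ. -/

import Mathlib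

set_option synthInstance.maxHeartbeats 1000000
set_option maxHeartbeats 1000000


open scoped RealInnerProductSpace

variable {g : Type*} [NormedAddCommGroup g] [InnerProductSpace ℝ g] [FiniteDimensional ℝ g]

/-- The adjoint operator `ad_u : v ↦ ⁅u, v⁆` of a Lie bracket `br`, as a
continuous linear map on the finite-dimensional space `g`. -/
noncomputable def adOp (br : g →ₗ[ℝ] g →ₗ[ℝ] g) (u : g) : g →L[ℝ] g :=
  LinearMap.toContinuousLinearMap (br u)

/-- The coadjoint operator `ad*_u`, the adjoint of `ad_u` with respect to the
inner product. -/
noncomputable def adStarOp (br : g →ₗ[ℝ] g →ₗ[ℝ] g) (u : g) : g →L[ℝ] g :=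
  ContinuousLinearMap.adjoint (adOp br u)

/-- The operator exponential `Φ(t) = exp(t ad_X)`. -/
noncomputable def phiExp (br : g →ₗ[ℝ] g →ₗ[ℝ] g) (X : g) (t : ℝ) : g →L[ℝ] g :=
  NormedSpace.exp (t • adOp br X)

lemma adOp_apply (br : g →ₗ[ℝ] g →ₗ[ℝ] g) (u v : g) : adOp br u v = br u v := rfl

lemma adOp_add (br : g →ₗ[ℝ] g →ₗ[ℝ] g) (u v : g) :
    adOp br (u + v) = adOp br u + adOp br v := by
  ext w; simp [adOp_apply, map_add, ContinuousLinearMap.add_apply, adOp,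
    LinearMap.coe_toContinuousLinearMap]

lemma adStarOp_add (br : g →ₗ[ℝ] g →ₗ[ℝ] g) (u v : g) :
    adStarOp br (u + v) = adStarOp br u + adStarOp br v := by
  rw [adStarOp, adOp_add, map_add]; rfl

lemma phi_mul (br : g →ₗ[ℝ] g →ₗ[ℝ] g) (X : g) (s t : ℝ) :
    phiExp br X s * phiExp br X t = phiExp br X (s + t) := by
  unfold phiExp
  have hc : Commute (s • adOp br X) (t • adOp br X) := by
    unfold Commute SemiconjBy
    rw [smul_mul_assoc, mul_smul_comm, smul_mul_assoc, mul_smul_comm, smul_comm]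
  letI : NormedAlgebra ℚ (g →L[ℝ] g) := NormedAlgebra.restrictScalars ℚ ℝ (g →L[ℝ] g)
  rw [add_smul, NormedSpace.exp_add_of_commute hc]

lemma phi_zero (br : g →ₗ[ℝ] g →ₗ[ℝ] g) (X : g) : phiExp br X 0 = 1 := by
  simp [phiExp, NormedSpace.exp_zero]

lemma phi_left_inv (br : g →ₗ[ℝ] g →ₗ[ℝ] g) (X : g) (t : ℝ) (v : g) :
    phiExp br X (-t) (phiExp br X t v) = v := by
  have h : phiExp br X (-t) * phiExp br X t = 1 := by
    rw [phi_mul, neg_add_cancel, phi_zero]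
  calc phiExp br X (-t) (phiExp br X t v) = (phiExp br X (-t) * phiExp br X t) v := rfl
    _ = v := by rw [h]; rfl

lemma phi_injective (br : g →ₗ[ℝ] g →ₗ[ℝ] g) (X : g) (t : ℝ) {v w : g}
    (h : phiExp br X t v = phiExp br X t w) : v = w := by
  have := congrArg (phiExp br X (-t)) h
  rwa [phi_left_inv, phi_left_inv] at this

lemma hasDerivAt_phi_apply (br : g →ₗ[ℝ] g →ₗ[ℝ] g) (X : g) (t : ℝ) {V : ℝ → g} {v' : g}
    (hv : HasDerivAt V v' t) :
    HasDerivAt (fun s : ℝ => phiExp br X s (V s))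
      (adOp br X (phiExp br X t (V t)) + phiExp br X t v') t := by
  have h1 : HasDerivAt (fun s : ℝ => phiExp br X s) (adOp br X * phiExp br X t) t := by
    simpa [phiExp] using hasDerivAt_exp_smul_const' (adOp br X) t
  simpa [ContinuousLinearMap.mul_apply] using h1.clm_apply hv

lemma br_self_eq_zero (br : g →ₗ[ℝ] g →ₗ[ℝ] g) (hanti : ∀ x y : g, br x y = -br y x)
    (X : g) : br X X = 0 := by
  have h := hanti X X
  have h2 : (2 : ℝ) • br X X = 0 := by
    rw [two_smul]; nth_rewrite 2 [h]; rw [add_neg_cancel]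
  rcases smul_eq_zero.mp h2 with h3 | h3
  · exact absurd h3 two_ne_zero
  · exact h3

lemma phi_fixed (br : g →ₗ[ℝ] g →ₗ[ℝ] g) (hanti : ∀ x y : g, br x y = -br y x)
    (X : g) (t : ℝ) : phiExp br X t X = X := by
  have hXX : adOp br X X = 0 := by
    rw [adOp_apply]; exact br_self_eq_zero br hanti X
  have hd : ∀ s : ℝ, HasDerivAt (fun u : ℝ => phiExp br X u X) 0 s := by
    intro s
    have h1 : HasDerivAt (fun u : ℝ => phiExp br X u) (phiExp br X s * adOp br X) s := by
      simpa [phiExp] using hasDerivAt_exp_smul_const (adOp br X) s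
    simpa [ContinuousLinearMap.mul_apply, hXX] using h1.clm_apply (hasDerivAt_const s X)
  have hc : (fun u : ℝ => phiExp br X u X) t = (fun u : ℝ => phiExp br X u X) 0 :=
    is_const_of_deriv_eq_zero (fun s => (hd s).differentiableAt)
      (fun s => (hd s).deriv) t 0
  simpa [phi_zero] using hc

/-- `adOp br X` is a derivation of the bracket. -/
lemma adOp_derivation (br : g →ₗ[ℝ] g →ₗ[ℝ] g) (hanti : ∀ x y : g, br x y = -br y x)
    (hjacobi : ∀ x y z : g, br (br x y) z + br (br y z) x + br (br z x) y = 0)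
    (X a b : g) : adOp br X (br a b) = br (adOp br X a) b + br a (adOp br X b) := by
  simp only [adOp_apply]
  have hj := hjacobi X a b
  have h1 : br (br a b) X = -br X (br a b) := hanti _ _
  have h2 : br (br b X) a = br a (br X b) := by
    rw [hanti (br b X) a, hanti b X, map_neg, neg_neg]
  -- hj : br (br X a) b + br (br a b) X + br (br b X) a = 0
  rw [h1, h2] at hj
  linear_combination (norm := module) -hj

/-- continuous bilinear bracket, curried -/
noncomputable def brC (br : g →ₗ[ℝ] g →ₗ[ℝ] g) : g →L[ℝ] g →L[ℝ] g :=
  LinearMap.toContinuousLinearMap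
    { toFun := fun u => adOp br u
      map_add' := fun u v => adOp_add br u v
      map_smul' := fun c u => by
        ext w
        simp [adOp_apply, map_smul, adOp, LinearMap.coe_toContinuousLinearMap] }

lemma brC_apply (br : g →ₗ[ℝ] g →ₗ[ℝ] g) (u v : g) : brC br u v = br u v := rfl

/-- `Φ(t)` is a Lie algebra automorphism. -/
lemma phi_bracket (br : g →ₗ[ℝ] g →ₗ[ℝ] g) (hanti : ∀ x y : g, br x y = -br y x)
    (hjacobi : ∀ x y z : g, br (br x y) z + br (br y z) x + br (br z x) y = 0)
    (X : g) (t : ℝ) (a b : g) :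
    phiExp br X t (br a b) = br (phiExp br X t a) (phiExp br X t b) := by
  set A := adOp br X with hA
  -- G s = Φ(-s) [Φ(s) a, Φ(s) b] is constant
  set G : ℝ → g := fun s => phiExp br X (-s) (br (phiExp br X s a) (phiExp br X s b)) with hG
  have hWd : ∀ s : ℝ, HasDerivAt (fun u : ℝ => br (phiExp br X u a) (phiExp br X u b))
      (A (br (phiExp br X s a) (phiExp br X s b))) s := by
    intro s
    have ha : HasDerivAt (fun u : ℝ => phiExp br X u a) (A (phiExp br X s a)) s := by
      simpa using hasDerivAt_phi_apply br X s (hasDerivAt_const s a)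
    have hb : HasDerivAt (fun u : ℝ => phiExp br X u b) (A (phiExp br X s b)) s := by
      simpa using hasDerivAt_phi_apply br X s (hasDerivAt_const s b)
    have hc : HasDerivAt (fun u : ℝ => brC br (phiExp br X u a))
        (brC br (A (phiExp br X s a))) s :=
      (brC br).hasFDerivAt.comp_hasDerivAt s ha
    have := hc.clm_apply hb
    simp only [brC_apply] at this
    convert this using 1
    rw [adOp_derivation br hanti hjacobi X]
  have hGd : ∀ s : ℝ, HasDerivAt G 0 s := by
    intro s
    have hphi : HasDerivAt (fun u : ℝ => phiExp br X (-u))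
        (-(phiExp br X (-s) * A)) s := by
      have h1 : HasDerivAt (fun u : ℝ => NormedSpace.exp (u • A))
          (NormedSpace.exp ((-s) • A) * A) (-s) := hasDerivAt_exp_smul_const A (-s)
      have h2 : HasDerivAt (fun u : ℝ => -u) (-1 : ℝ) s := (hasDerivAt_id s).neg
      have h3 := h1.scomp s h2
      simpa [phiExp, Function.comp_def, neg_smul] using h3
    have hfin := hphi.clm_apply (hWd s)
    simp only [ContinuousLinearMap.neg_apply, ContinuousLinearMap.mul_apply] at hfin
    convert hfin using 1
    simp
  have hc : G t = G 0 :=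
    is_const_of_deriv_eq_zero (fun s => (hGd s).differentiableAt)
      (fun s => (hGd s).deriv) t 0
  have hG0 : G 0 = br a b := by simp [hG, phi_zero]
  have := congrArg (phiExp br X t) (hc.trans hG0)
  calc phiExp br X t (br a b)
      = phiExp br X t (phiExp br X (-t) (br (phiExp br X t a) (phiExp br X t b))) := this.symm
    _ = br (phiExp br X t a) (phiExp br X t b) := by
        have := phi_left_inv br X (-t) (br (phiExp br X t a) (phiExp br X t b))
        simpa using this

lemma phi_adjoint (br : g →ₗ[ℝ] g →ₗ[ℝ] g) (X : g) (hX : adStarOp br X = -adOp br X)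
    (t : ℝ) : ContinuousLinearMap.adjoint (phiExp br X t) = phiExp br X (-t) := by
  have hstar : star (adOp br X) = -adOp br X := by
    rw [ContinuousLinearMap.star_eq_adjoint]; exact hX
  rw [← ContinuousLinearMap.star_eq_adjoint]
  unfold phiExp
  rw [NormedSpace.star_exp, star_smul, star_trivial, hstar, smul_neg, ← neg_smul]

lemma phi_inner (br : g →ₗ[ℝ] g →ₗ[ℝ] g) (X : g) (hX : adStarOp br X = -adOp br X)
    (t : ℝ) (a b : g) : ⟪phiExp br X t a, phiExp br X t b⟫ = ⟪a, b⟫ := by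
  rw [← ContinuousLinearMap.adjoint_inner_right, phi_adjoint br X hX, phi_left_inv]

/-- Equivariance of the coadjoint with respect to `Φ(t)`. -/
lemma adStar_phi (br : g →ₗ[ℝ] g →ₗ[ℝ] g) (hanti : ∀ x y : g, br x y = -br y x)
    (hjacobi : ∀ x y z : g, br (br x y) z + br (br y z) x + br (br z x) y = 0)
    (X : g) (hX : adStarOp br X = -adOp br X) (t : ℝ) (w z : g) :
    adStarOp br (phiExp br X t w) (phiExp br X t z) = phiExp br X t (adStarOp br w z) := by
  apply ext_inner_right ℝ
  intro y
  rw [adStarOp, ContinuousLinearMap.adjoint_inner_left]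
  have hy : y = phiExp br X t (phiExp br X (-t) y) := by
    have := phi_left_inv br X (-t) y
    simpa using this.symm
  conv_lhs => rw [hy]
  rw [adOp_apply, ← phi_bracket br hanti hjacobi X t, phi_inner br X hX,
    ← adOp_apply, ← ContinuousLinearMap.adjoint_inner_left, ← adStarOp]
  rw [← ContinuousLinearMap.adjoint_inner_right (phiExp br X t), phi_adjoint br X hX]

lemma keyAlg (br : g →ₗ[ℝ] g →ₗ[ℝ] g) (hanti : ∀ x y : g, br x y = -br y x)
    (hjacobi : ∀ x y z : g, br (br x y) z + br (br y z) x + br (br z x) y = 0)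
    (X : g) (hX : adStarOp br X = -adOp br X) (t : ℝ) (v : g) :
    -(adStarOp br (X + phiExp br X t v) (X + phiExp br X t v))
      = adOp br X (phiExp br X t v)
        + phiExp br X t (-(adStarOp br v v) - adStarOp br v X) := by
  have h1 : adStarOp br (X + phiExp br X t v) (X + phiExp br X t v)
      = adStarOp br X X + adStarOp br X (phiExp br X t v)
        + adStarOp br (phiExp br X t v) X + adStarOp br (phiExp br X t v) (phiExp br X t v) := by
    rw [adStarOp_add]
    simp only [ContinuousLinearMap.add_apply, map_add]
    abel
  have hXX : adStarOp br X X = 0 := by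
    rw [hX]
    simp [ContinuousLinearMap.neg_apply, adOp_apply, br_self_eq_zero br hanti X]
  have hXP : adStarOp br X (phiExp br X t v) = -(adOp br X (phiExp br X t v)) := by
    rw [hX]; rfl
  have hPX : adStarOp br (phiExp br X t v) X = phiExp br X t (adStarOp br v X) := by
    have h := adStar_phi br hanti hjacobi X hX t v X
    rwa [phi_fixed br hanti X t] at h
  have hPP : adStarOp br (phiExp br X t v) (phiExp br X t v)
      = phiExp br X t (adStarOp br v v) :=
    adStar_phi br hanti hjacobi X hX t v v
  rw [h1, hXX, hXP, hPX, hPP]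
  simp only [map_sub, map_neg]
  abel

theorem statement11 (br : g →ₗ[ℝ] g →ₗ[ℝ] g)
    (hanti : ∀ x y : g, br x y = -br y x)
    (hjacobi : ∀ x y z : g, br (br x y) z + br (br y z) x + br (br z x) y = 0)
    (X : g) (hX : adStarOp br X = -adOp br X)
    (V : ℝ → g) (hV : Differentiable ℝ V) :
    (∀ t : ℝ,
        HasDerivAt (fun s : ℝ => X + phiExp br X s (V s))
          (-(adStarOp br (X + phiExp br X t (V t)) (X + phiExp br X t (V t)))) t)
      ↔ (∀ t : ℝ,
        HasDerivAt V (-(adStarOp br (V t) (V t)) - adStarOp br (V t) X) t) := by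
  constructor
  · intro hU t
    have hv : HasDerivAt V (deriv V t) t := (hV t).hasDerivAt
    have h1 : HasDerivAt (fun s : ℝ => X + phiExp br X s (V s))
        (adOp br X (phiExp br X t (V t)) + phiExp br X t (deriv V t)) t :=
      ((hasDerivAt_phi_apply br X t hv).const_add X)
    have h2 := (hU t).unique h1
    rw [keyAlg br hanti hjacobi X hX t (V t)] at h2
    have h3 : phiExp br X t (-(adStarOp br (V t) (V t)) - adStarOp br (V t) X)
        = phiExp br X t (deriv V t) := add_left_cancel h2
    have h4 := phi_injective br X t h3
    rw [← h4] at hv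
    exact hv
  · intro hE t
    have h1 : HasDerivAt (fun s : ℝ => X + phiExp br X s (V s))
        (adOp br X (phiExp br X t (V t))
          + phiExp br X t (-(adStarOp br (V t) (V t)) - adStarOp br (V t) X)) t :=
      ((hasDerivAt_phi_apply br X t (hE t)).const_add X)
    rw [keyAlg br hanti hjacobi X hX t (V t)]
    exact h1
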